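/- If T: C → C is a nonexpansive mapping on a nonempty closed convex subset C of a real Hilbert space, then I − T is demiclosed: whenever a sequence {xₙ} in C converges weakly to x ∈ C and {xₙ − T xₙ} converges strongly to y, then x − T x = y. -/

import Mathlib

/-- If `T : C → C` is nonexpansive on a nonempty closed convex subset `C` of a real
Hilbert space, then `I - T` is demiclosed: if `xₙ ∈ C` converges weakly to `x ∈ C` and
`xₙ - T xₙ` converges strongly to `y`, then `x - T x = y`. -/
theorem demiclosedness_of_nonexpansive
    {H : Type*} [NormedAddCommGroup H] [InnerProductSpace ℝ H] [CompleteSpace H]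
    (C : Set H) (hC : C.Nonempty) (hCclosed : IsClosed C) (hCconv : Convex ℝ C)
    (T : H → H) (hTmaps : ∀ x ∈ C, T x ∈ C)
    (hTne : ∀ x ∈ C, ∀ y ∈ C, ‖T x - T y‖ ≤ ‖x - y‖)
    (hfix : ∃ x ∈ C, T x = x)
    (x : ℕ → H) (hxC : ∀ n, x n ∈ C) (xbar : H) (hxbar : xbar ∈ C)
    (hweak : ∀ w : H, Filter.Tendsto (fun n => (inner ℝ (x n) w : ℝ)) Filter.atTop
      (nhds (inner ℝ xbar w)))
    (y : H)
    (hstrong : Filter.Tendsto (fun n => x n - T (x n)) Filter.atTop (nhds y)) :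
    xbar - T xbar = y := by
  set u : H := xbar - T xbar - y with hu
  set ε : ℕ → ℝ := fun n => ‖x n - T (x n) - y‖ with hε
  have hε0 : ∀ n, 0 ≤ ε n := fun n => norm_nonneg _
  have hεlim : Filter.Tendsto ε Filter.atTop (nhds 0) := by
    have := (tendsto_sub_nhds_zero_iff.2 hstrong).norm
    simpa using this
  -- boundedness of the weakly convergent sequence via Banach–Steinhaus
  obtain ⟨M, hM⟩ : ∃ M, ∀ n, ‖x n‖ ≤ M := by
    have hb : ∀ w : H, ∃ Cw, ∀ n, ‖(innerSL ℝ (x n)) w‖ ≤ Cw := by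
      intro w
      obtain ⟨R, hRpos, hR⟩ := cauchySeq_bdd (hweak w).cauchySeq
      refine ⟨‖(inner ℝ (x 0) w : ℝ)‖ + R, fun n => ?_⟩
      have := hR n 0
      have h1 : ‖(inner ℝ (x n) w : ℝ) - (inner ℝ (x 0) w : ℝ)‖ < R := by
        simpa [dist_eq_norm] using this
      calc ‖(innerSL ℝ (x n)) w‖ = ‖((inner ℝ (x n) w : ℝ) - inner ℝ (x 0) w) + inner ℝ (x 0) w‖ := by
            simp
        _ ≤ ‖(inner ℝ (x n) w : ℝ) - inner ℝ (x 0) w‖ + ‖(inner ℝ (x 0) w : ℝ)‖ := norm_add_le _ _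
        _ ≤ ‖(inner ℝ (x 0) w : ℝ)‖ + R := by linarith
    obtain ⟨M, hM⟩ := banach_steinhaus hb
    exact ⟨M, fun n => by simpa using hM n⟩
  set M' : ℝ := M + ‖xbar‖ with hM'
  have hbd : ∀ n, ‖x n - xbar‖ ≤ M' := fun n =>
    (norm_sub_le _ _).trans (by simpa [hM'] using add_le_add_right (hM n) ‖xbar‖)
  -- the key pointwise inequality
  have key : ∀ n, 2 * (inner ℝ (x n) u - inner ℝ xbar u : ℝ) + ‖u‖ ^ 2
      ≤ 2 * (ε n * M') + ε n ^ 2 := by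
    intro n
    have hexp : ‖(x n - xbar) + u‖ ^ 2
        = ‖x n - xbar‖ ^ 2 + 2 * (inner ℝ (x n - xbar) u : ℝ) + ‖u‖ ^ 2 :=
      norm_add_sq_real _ _
    have hrw : (x n - xbar) + u = (x n - T (x n) - y) + (T (x n) - T xbar) := by
      simp [hu]; abel
    have hub : ‖(x n - xbar) + u‖ ≤ ε n + ‖x n - xbar‖ := by
      rw [hrw]
      exact (norm_add_le _ _).trans (add_le_add le_rfl (hTne (x n) (hxC n) xbar hxbar))
    have hub2 : ‖(x n - xbar) + u‖ ^ 2 ≤ (ε n + ‖x n - xbar‖) ^ 2 := by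
      have h1 : (0:ℝ) ≤ ‖(x n - xbar) + u‖ := norm_nonneg _
      nlinarith
    have hin : (inner ℝ (x n - xbar) u : ℝ) = inner ℝ (x n) u - inner ℝ xbar u := by
      rw [inner_sub_left]
    have hb := hbd n
    have hnn : (0:ℝ) ≤ ‖x n - xbar‖ := norm_nonneg _
    nlinarith [hexp, hub2, hin, hε0 n]
  -- pass to the limit
  have hLlim : Filter.Tendsto (fun n => 2 * (inner ℝ (x n) u - inner ℝ xbar u : ℝ) + ‖u‖ ^ 2)
      Filter.atTop (nhds (‖u‖ ^ 2)) := by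
    have h1 := ((hweak u).sub_const (inner ℝ xbar u)).const_mul 2
    have := h1.add_const (‖u‖ ^ 2)
    simpa using this
  have hRlim : Filter.Tendsto (fun n => 2 * (ε n * M') + ε n ^ 2) Filter.atTop (nhds 0) := by
    have h1 := (hεlim.mul_const M').const_mul 2
    have h2 := hεlim.pow 2
    have := h1.add h2
    simpa using this
  have husq : ‖u‖ ^ 2 ≤ 0 := le_of_tendsto_of_tendsto' hLlim hRlim key
  have hu0 : u = 0 := by
    have : ‖u‖ = 0 := by nlinarith [norm_nonneg u]
    simpa using this
  have : xbar - T xbar - y = 0 := hu0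
  exact sub_eq_zero.1 this
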